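/- Let {x^k} be generated by the double-layer fixed point algorithm under conditions (i) and (ii), and assume: (iii) if lim_{k→∞} max_{i∈I_k} p_i(x^k) = 0 then lim_{k→∞} max_{j∈J_k} p_j(x^k) = 0; (iv) for every bounded sequence {y^k} ⊆ H and each i ∈ I, p_i(y^k) → 0 if and only if ‖U_i y^k − y^k‖ → 0. If for each i ∈ I the operator U_i is boundedly regular and the family {C_i : i ∈ I} is boundedly regular, then {x^k} converges in norm to some point x^∞ ∈ C. -/

import Mathlib

open Filter Function Metric Bornology RealInnerProductSpace

lemma tendsto_of_sq_tendsto {f : ℕ → ℝ} (h0 : ∀ k, 0 ≤ f k)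
    (h : Tendsto (fun k => f k ^ 2) atTop (nhds 0)) : Tendsto f atTop (nhds 0) := by
  have h1 : Tendsto (fun k => Real.sqrt (f k ^ 2)) atTop (nhds 0) := by
    have := (Real.continuous_sqrt.tendsto 0).comp h
    simpa [Function.comp_def] using this
  exact h1.congr fun k => Real.sqrt_sq (h0 k)

lemma le_of_sq_le_sq'' {a b : ℝ} (hb : 0 ≤ b) (h : a ^ 2 ≤ b ^ 2) (ha : 0 ≤ a) : a ≤ b := by
  nlinarith

set_option maxHeartbeats 1000000 in
theorem doubleLayer_norm_convergence
    {H : Type*} [NormedAddCommGroup H] [InnerProductSpace ℝ H] [CompleteSpace H]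
    {m : ℕ} [NeZero m]
    (U : Fin m → H → H) (p : Fin m → H → ℝ)
    (hcutter : ∀ i, ∀ x : H, ∀ z ∈ fixedPoints (U i), ⟪x - U i x, z - U i x⟫ ≤ 0)
    (hpnonneg : ∀ i, ∀ x : H, 0 ≤ p i x)
    (hpfix : ∀ i, fixedPoints (U i) = {x : H | p i x = 0})
    (hC : (⋂ i, fixedPoints (U i)).Nonempty)
    (x : ℕ → H) (Ik Jk : ℕ → Finset (Fin m)) (α : ℕ → ℝ) (ω : ℕ → Fin m → ℝ)
    (hIkne : ∀ k, (Ik k).Nonempty) (hIJ : ∀ k, Ik k ⊆ Jk k)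
    (αminus αplus ωminus : ℝ)
    (hαminus : αminus ∈ Set.Ioc (0 : ℝ) 1) (hαplus : αplus ∈ Set.Ico (1 : ℝ) 2)
    (hωminus : ωminus ∈ Set.Ioc (0 : ℝ) 1)
    (hα : ∀ k, α k ∈ Set.Icc αminus αplus)
    (hω : ∀ k, ∀ i ∈ Ik k, ω k i ∈ Set.Icc ωminus 1)
    (hωsum : ∀ k, ∑ i ∈ Ik k, ω k i = 1)
    (hrec : ∀ k, x (k + 1) = x k + α k • ((∑ i ∈ Ik k, ω k i • U i (x k)) - x k))
    (s : ℕ) (hs : 1 ≤ s)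
    (hcover : ∀ k, ∀ i : Fin m, ∃ l < s, i ∈ Jk (k + l))
    (hiii : Tendsto (fun k => (Ik k).sup' (hIkne k) fun i => p i (x k)) atTop (nhds 0) →
      Tendsto (fun k => (Jk k).sup' ((hIkne k).mono (hIJ k)) fun i => p i (x k))
        atTop (nhds 0))
    (hiv : ∀ y : ℕ → H, IsBounded (Set.range y) → ∀ i,
      (Tendsto (fun k => p i (y k)) atTop (nhds 0) ↔
        Tendsto (fun k => ‖U i (y k) - y k‖) atTop (nhds 0)))
    (hbr : ∀ i, ∀ y : ℕ → H, IsBounded (Set.range y) →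
      Tendsto (fun k => ‖U i (y k) - y k‖) atTop (nhds 0) →
      Tendsto (fun k => infDist (y k) (fixedPoints (U i))) atTop (nhds 0))
    (hfbr : ∀ y : ℕ → H, IsBounded (Set.range y) →
      Tendsto (fun k => Finset.univ.sup' Finset.univ_nonempty fun i =>
        infDist (y k) (fixedPoints (U i))) atTop (nhds 0) →
      Tendsto (fun k => infDist (y k) (⋂ i, fixedPoints (U i))) atTop (nhds 0)) :
    ∃ xinf ∈ ⋂ i, fixedPoints (U i), Tendsto x atTop (nhds xinf) := by
  classical
  obtain ⟨z0, hz0⟩ := hC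
  have hz0' : ∀ i, U i z0 = z0 := fun i => Set.mem_iInter.mp hz0 i
  set c : ℝ := αminus * (2 - αplus) with hc
  have hcpos : 0 < c := mul_pos hαminus.1 (by linarith [hαplus.2])
  set S : ℕ → ℝ := fun k => ∑ i ∈ Ik k, ω k i * ‖U i (x k) - x k‖ ^ 2 with hSdef
  have hωnn : ∀ k, ∀ i ∈ Ik k, 0 ≤ ω k i :=
    fun k i hi => le_trans hωminus.1.le (hω k i hi).1
  have hSnonneg : ∀ k, 0 ≤ S k := fun k =>
    Finset.sum_nonneg fun i hi => mul_nonneg (hωnn k i hi) (sq_nonneg _)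
  -- d and Jensen
  have hd : ∀ k, (∑ i ∈ Ik k, ω k i • U i (x k)) - x k
      = ∑ i ∈ Ik k, ω k i • (U i (x k) - x k) := by
    intro k
    simp only [smul_sub]
    rw [Finset.sum_sub_distrib, ← Finset.sum_smul, hωsum k, one_smul]
  have hJ : ∀ k, ‖(∑ i ∈ Ik k, ω k i • U i (x k)) - x k‖ ^ 2 ≤ S k := by
    intro k
    rw [hd k]
    have h1 : ‖∑ i ∈ Ik k, ω k i • (U i (x k) - x k)‖
        ≤ ∑ i ∈ Ik k, ω k i * ‖U i (x k) - x k‖ := by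
      calc ‖∑ i ∈ Ik k, ω k i • (U i (x k) - x k)‖
          ≤ ∑ i ∈ Ik k, ‖ω k i • (U i (x k) - x k)‖ := norm_sum_le _ _
        _ = ∑ i ∈ Ik k, ω k i * ‖U i (x k) - x k‖ := Finset.sum_congr rfl fun i hi => by
            rw [norm_smul, Real.norm_of_nonneg (hωnn k i hi)]
    have h2 : (∑ i ∈ Ik k, ω k i * ‖U i (x k) - x k‖) ^ 2
        ≤ (∑ i ∈ Ik k, ω k i) * S k := by
      refine Finset.sum_sq_le_sum_mul_sum_of_sq_eq_mul (Ik k)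
        (fun i hi => hωnn k i hi)
        (fun i hi => mul_nonneg (hωnn k i hi) (sq_nonneg _))
        (fun i hi => by ring)
    rw [hωsum k, one_mul] at h2
    calc ‖∑ i ∈ Ik k, ω k i • (U i (x k) - x k)‖ ^ 2
        ≤ (∑ i ∈ Ik k, ω k i * ‖U i (x k) - x k‖) ^ 2 := by
          apply pow_le_pow_left₀ (norm_nonneg _) h1
      _ ≤ S k := h2
  -- key inequality
  have key : ∀ z ∈ (⋂ i, fixedPoints (U i)), ∀ k,
      ‖x (k + 1) - z‖ ^ 2 + c * S k ≤ ‖x k - z‖ ^ 2 := by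
    intro z hz k
    have hzi : ∀ i, U i z = z := fun i => Set.mem_iInter.mp hz i
    set a := x k with ha
    set d := (∑ i ∈ Ik k, ω k i • U i a) - a with hdd
    have hx1 : x (k + 1) - z = (a - z) + α k • d := by
      rw [hrec k]; abel
    have hαpos : 0 < α k := lt_of_lt_of_le hαminus.1 (hα k).1
    have hexp : ‖x (k + 1) - z‖ ^ 2
        = ‖a - z‖ ^ 2 + 2 * α k * ⟪a - z, d⟫ + α k ^ 2 * ‖d‖ ^ 2 := by
      rw [hx1, norm_add_sq_real, real_inner_smul_right, norm_smul,
        Real.norm_of_nonneg hαpos.le, mul_pow]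
      ring
    have hcut : ∀ i ∈ Ik k, ⟪a - z, U i a - a⟫ ≤ -‖U i a - a‖ ^ 2 := by
      intro i _
      have h := hcutter i a z (by rw [fixedPoints]; exact hzi i)
      have hzdec : z - U i a = (z - a) + (a - U i a) := by abel
      rw [hzdec, inner_add_right, real_inner_self_eq_norm_sq] at h
      have heq : ⟪a - z, U i a - a⟫ = ⟪a - U i a, z - a⟫ := by
        rw [show U i a - a = -(a - U i a) by abel, show a - z = -(z - a) by abel,
          inner_neg_neg]; exact real_inner_comm _ _
      rw [heq, show ‖U i a - a‖ = ‖a - U i a‖ from norm_sub_rev _ _]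
      linarith
    have hinner : ⟪a - z, d⟫ ≤ -S k := by
      rw [hdd, hd k, inner_sum]
      simp only [real_inner_smul_right]
      rw [hSdef, ← Finset.sum_neg_distrib]
      refine Finset.sum_le_sum fun i hi => ?_
      have h1 := hcut i hi
      have h2 := hωnn k i hi
      nlinarith [mul_le_mul_of_nonneg_left h1 h2]
    have hJk := hJ k
    rw [← hdd] at hJk
    have hαb := hα k
    have h5 : c * S k ≤ (α k * (2 - α k)) * S k := by
      apply mul_le_mul_of_nonneg_right _ (hSnonneg k)
      nlinarith [hαb.1, hαb.2, hαplus.2, hαminus.1]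
    nlinarith [mul_le_mul_of_nonneg_left hinner (by linarith : (0:ℝ) ≤ 2 * α k),
      mul_le_mul_of_nonneg_left hJk (sq_nonneg (α k))]
  -- Fejer monotonicity
  have fej : ∀ z ∈ (⋂ i, fixedPoints (U i)), ∀ k, ‖x (k + 1) - z‖ ≤ ‖x k - z‖ := by
    intro z hz k
    have h := key z hz k
    have h2 : ‖x (k + 1) - z‖ ^ 2 ≤ ‖x k - z‖ ^ 2 := by nlinarith [hSnonneg k]
    exact le_of_sq_le_sq'' (norm_nonneg _) h2 (norm_nonneg _)
  have fej' : ∀ z ∈ (⋂ i, fixedPoints (U i)), ∀ k n, k ≤ n → ‖x n - z‖ ≤ ‖x k - z‖ := by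
    intro z hz k n hkn
    induction n, hkn using Nat.le_induction with
    | base => exact le_refl _
    | succ n hn ih => exact (fej z hz n).trans ih
  -- boundedness
  have hbx : IsBounded (Set.range x) := by
    apply (isBounded_closedBall (x := z0) (r := ‖x 0 - z0‖)).subset
    rintro _ ⟨k, rfl⟩
    rw [mem_closedBall, dist_eq_norm]
    exact fej' z0 hz0 0 k (Nat.zero_le k)
  -- S tends to 0
  have hS0 : Tendsto S atTop (nhds 0) := by
    set b : ℕ → ℝ := fun k => ‖x k - z0‖ ^ 2 with hbdef
    have hbant : Antitone b := antitone_nat_of_succ_le fun k =>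
      pow_le_pow_left₀ (norm_nonneg _) (fej z0 hz0 k) 2
    have hbbdd : BddBelow (Set.range b) := ⟨0, by rintro _ ⟨k, rfl⟩; exact sq_nonneg _⟩
    have hbconv : Tendsto b atTop (nhds (⨅ k, b k)) := tendsto_atTop_ciInf hbant hbbdd
    have hShift : Tendsto (fun k => b (k + 1)) atTop (nhds (⨅ k, b k)) :=
      hbconv.comp (tendsto_add_atTop_nat 1)
    have hdiff : Tendsto (fun k => (b k - b (k + 1)) / c) atTop (nhds 0) := by
      have := (hbconv.sub hShift).div_const c
      simpa using this
    refine tendsto_of_tendsto_of_tendsto_of_le_of_le tendsto_const_nhds hdiff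
      (fun k => hSnonneg k) (fun k => ?_)
    have := key z0 hz0 k
    rw [le_div_iff₀ hcpos, hbdef]
    simp only []
    nlinarith
  -- per-index squared residuals bounded by S/ωminus
  have hres : ∀ k, ∀ i ∈ Ik k, ‖U i (x k) - x k‖ ^ 2 ≤ S k / ωminus := by
    intro k i hi
    rw [le_div_iff₀ hωminus.1]
    calc ‖U i (x k) - x k‖ ^ 2 * ωminus = ωminus * ‖U i (x k) - x k‖ ^ 2 := by ring
      _ ≤ ω k i * ‖U i (x k) - x k‖ ^ 2 :=
          mul_le_mul_of_nonneg_right (hω k i hi).1 (sq_nonneg _)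
      _ ≤ S k := Finset.single_le_sum
          (f := fun j => ω k j * ‖U j (x k) - x k‖ ^ 2)
          (fun j hj => mul_nonneg (hωnn k j hj) (sq_nonneg _)) hi
  have hSdiv : Tendsto (fun k => S k / ωminus) atTop (nhds 0) := by
    have := hS0.div_const ωminus
    simpa using this
  -- auxiliary sequences Y over Ik
  set Y : Fin m → ℕ → H := fun i k => if i ∈ Ik k then x k else z0 with hYdef
  have hYbdd : ∀ i, IsBounded (Set.range (Y i)) := by
    intro i
    apply (hbx.union (isBounded_singleton (x := z0))).subset
    rintro _ ⟨k, rfl⟩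
    by_cases h : i ∈ Ik k <;> simp [hYdef, h]
  have hUY : ∀ i, Tendsto (fun k => ‖U i (Y i k) - Y i k‖) atTop (nhds 0) := by
    intro i
    apply tendsto_of_sq_tendsto (fun k => norm_nonneg _)
    refine tendsto_of_tendsto_of_tendsto_of_le_of_le tendsto_const_nhds hSdiv
      (fun k => sq_nonneg _) (fun k => ?_)
    by_cases h : i ∈ Ik k
    · simp only [hYdef, if_pos h]
      exact hres k i h
    · simp only [hYdef, if_neg h, hz0' i, sub_self, norm_zero]
      have : ((0:ℝ)) ^ 2 ≤ S k / ωminus := by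
        simpa using div_nonneg (hSnonneg k) hωminus.1.le
      exact this
  have hpY : ∀ i, Tendsto (fun k => p i (Y i k)) atTop (nhds 0) :=
    fun i => (hiv (Y i) (hYbdd i) i).mpr (hUY i)
  -- sup over Ik of p tends to 0
  have hsupI : Tendsto (fun k => (Ik k).sup' (hIkne k) fun i => p i (x k)) atTop (nhds 0) := by
    have hsum : Tendsto (fun k => ∑ i : Fin m, p i (Y i k)) atTop (nhds 0) := by
      have := tendsto_finset_sum Finset.univ (fun i (_ : i ∈ Finset.univ) => hpY i)
      simpa using this
    refine tendsto_of_tendsto_of_tendsto_of_le_of_le tendsto_const_nhds hsum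
      (fun k => ?_) (fun k => ?_)
    · obtain ⟨i, hi⟩ := hIkne k
      exact le_trans (hpnonneg i (x k)) (Finset.le_sup' (fun i => p i (x k)) hi)
    · refine Finset.sup'_le _ _ fun i hi => ?_
      have heq : p i (x k) = p i (Y i k) := by simp [hYdef, if_pos hi]
      rw [heq]
      exact Finset.single_le_sum (fun j (_ : j ∈ Finset.univ) => hpnonneg j (Y j k))
        (Finset.mem_univ i)
  have hsupJ := hiii hsupI
  -- auxiliary sequences Z over Jk
  set Z : Fin m → ℕ → H := fun i k => if i ∈ Jk k then x k else z0 with hZdef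
  have hZbdd : ∀ i, IsBounded (Set.range (Z i)) := by
    intro i
    apply (hbx.union (isBounded_singleton (x := z0))).subset
    rintro _ ⟨k, rfl⟩
    by_cases h : i ∈ Jk k <;> simp [hZdef, h]
  have hpZ : ∀ i, Tendsto (fun k => p i (Z i k)) atTop (nhds 0) := by
    intro i
    refine tendsto_of_tendsto_of_tendsto_of_le_of_le tendsto_const_nhds hsupJ
      (fun k => hpnonneg i _) (fun k => ?_)
    by_cases h : i ∈ Jk k
    · simp only [hZdef, if_pos h]
      exact Finset.le_sup' (fun i => p i (x k)) h
    · simp only [hZdef, if_neg h]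
      have : p i z0 = 0 := by
        have := hz0' i
        have h2 : z0 ∈ fixedPoints (U i) := this
        rw [hpfix i] at h2
        exact h2
      rw [this]
      obtain ⟨j, hj⟩ := (hIkne k).mono (hIJ k)
      exact le_trans (hpnonneg j (x k)) (Finset.le_sup' (fun i => p i (x k)) hj)
  have hD : ∀ i, Tendsto (fun k => infDist (Z i k) (fixedPoints (U i))) atTop (nhds 0) :=
    fun i => hbr i (Z i) (hZbdd i) ((hiv (Z i) (hZbdd i) i).mp (hpZ i))
  -- step size tends to 0
  have hstep : Tendsto (fun k => ‖x (k + 1) - x k‖) atTop (nhds 0) := by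
    apply tendsto_of_sq_tendsto (fun k => norm_nonneg _)
    have h4S : Tendsto (fun k => 4 * S k) atTop (nhds 0) := by
      have := hS0.const_mul 4
      simpa using this
    refine tendsto_of_tendsto_of_tendsto_of_le_of_le tendsto_const_nhds h4S
      (fun k => sq_nonneg _) (fun k => ?_)
    have h1 : x (k + 1) - x k = α k • ((∑ i ∈ Ik k, ω k i • U i (x k)) - x k) := by
      rw [hrec k]; abel
    rw [h1, norm_smul, Real.norm_of_nonneg (lt_of_lt_of_le hαminus.1 (hα k).1).le, mul_pow]
    have hαb := hα k
    have hα2 : α k ^ 2 ≤ 4 := by nlinarith [hαb.2, hαplus.2, hαminus.1, hαb.1]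
    exact mul_le_mul hα2 (hJ k) (sq_nonneg _) (by norm_num)
  -- sup over all i of infDist (x k) tends to 0
  have hbig : Tendsto (fun k => Finset.univ.sup' Finset.univ_nonempty fun i =>
      infDist (x k) (fixedPoints (U i))) atTop (nhds 0) := by
    set E : Fin m → ℕ → ℝ := fun i k =>
      ∑ j ∈ Finset.range s, infDist (Z i (k + j)) (fixedPoints (U i)) with hEdef
    set W : ℕ → ℝ := fun k => ∑ j ∈ Finset.range s, dist (x (k + j)) (x (k + j + 1)) with hWdef
    have hE0 : ∀ i, Tendsto (E i) atTop (nhds 0) := by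
      intro i
      have := tendsto_finset_sum (Finset.range s)
        (fun j (_ : j ∈ Finset.range s) => (hD i).comp (tendsto_add_atTop_nat j))
      simpa [hEdef, comp_def] using this
    have hW0 : Tendsto W atTop (nhds 0) := by
      have := tendsto_finset_sum (Finset.range s)
        (fun j (_ : j ∈ Finset.range s) => hstep.comp (tendsto_add_atTop_nat j))
      simp only [comp_def] at this
      have h2 : Tendsto (fun k => ∑ j ∈ Finset.range s, ‖x (k + j + 1) - x (k + j)‖)
          atTop (nhds 0) := by simpa using this
      refine (h2.congr fun k => ?_)
      refine Finset.sum_congr rfl fun j _ => ?_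
      rw [dist_eq_norm, norm_sub_rev]
    have hbound : ∀ k, ∀ i : Fin m, infDist (x k) (fixedPoints (U i))
        ≤ E i k + W k := by
      intro k i
      obtain ⟨l, hls, hmem⟩ := hcover k i
      have h1 : infDist (x k) (fixedPoints (U i))
          ≤ infDist (x (k + l)) (fixedPoints (U i)) + dist (x k) (x (k + l)) :=
        infDist_le_infDist_add_dist
      have h2 : infDist (x (k + l)) (fixedPoints (U i)) ≤ E i k := by
        have heq : x (k + l) = Z i (k + l) := by simp [hZdef, if_pos hmem]
        rw [heq]
        exact Finset.single_le_sum
          (f := fun j => infDist (Z i (k + j)) (fixedPoints (U i)))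
          (fun j _ => infDist_nonneg) (Finset.mem_range.mpr hls)
      have h3 : dist (x k) (x (k + l)) ≤ W k := by
        have := dist_le_range_sum_dist (fun j => x (k + j)) l
        simp only [Nat.add_zero] at this
        refine le_trans this ?_
        refine Finset.sum_le_sum_of_subset_of_nonneg ?_ (fun j _ _ => dist_nonneg)
        exact Finset.range_subset_range.mpr hls.le
      linarith
    have hub : Tendsto (fun k => (∑ i : Fin m, E i k) + W k) atTop (nhds 0) := by
      have h1 : Tendsto (fun k => ∑ i : Fin m, E i k) atTop (nhds 0) := by
        have := tendsto_finset_sum Finset.univ (fun i (_ : i ∈ Finset.univ) => hE0 i)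
        simpa only [Finset.sum_const_zero] using this
      simpa only [add_zero] using h1.add hW0
    refine tendsto_of_tendsto_of_tendsto_of_le_of_le tendsto_const_nhds hub
      (fun k => ?_) (fun k => ?_)
    · exact le_trans infDist_nonneg (Finset.le_sup' (fun i => infDist (x k) (fixedPoints (U i))) (Finset.mem_univ (hIkne k).choose))
    · refine Finset.sup'_le _ _ fun i _ => ?_
      have hEnn : ∀ j : Fin m, 0 ≤ E j k :=
        fun j => Finset.sum_nonneg fun _ _ => infDist_nonneg
      have h1 := hbound k i
      have h2 : E i k ≤ ∑ j : Fin m, E j k :=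
        Finset.single_le_sum (fun j _ => hEnn j) (Finset.mem_univ i)
      linarith
  have hinfC : Tendsto (fun k => infDist (x k) (⋂ i, fixedPoints (U i))) atTop (nhds 0) :=
    hfbr x hbx hbig
  -- Cauchy
  have hcauchy : CauchySeq x := by
    rw [Metric.cauchySeq_iff]
    intro ε hε
    obtain ⟨K, hK⟩ := (hinfC.eventually_lt_const (show (0:ℝ) < ε / 3 by linarith)).exists_forall_of_atTop
    have hKlt : infDist (x K) (⋂ i, fixedPoints (U i)) < ε / 3 := hK K (le_refl K)
    obtain ⟨z, hzC, hzd⟩ := (infDist_lt_iff ⟨z0, hz0⟩).mp hKlt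
    refine ⟨K, fun a ha b hb => ?_⟩
    have h1 : ‖x a - z‖ ≤ ‖x K - z‖ := fej' z hzC K a ha
    have h2 : ‖x b - z‖ ≤ ‖x K - z‖ := fej' z hzC K b hb
    have h3 : dist (x a) (x b) ≤ ‖x a - z‖ + ‖x b - z‖ := by
      rw [dist_eq_norm]
      calc ‖x a - x b‖ = ‖(x a - z) + (z - x b)‖ := by rw [sub_add_sub_cancel]
        _ ≤ ‖x a - z‖ + ‖z - x b‖ := norm_add_le _ _
        _ = ‖x a - z‖ + ‖x b - z‖ := by rw [norm_sub_rev z (x b)]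
    rw [dist_eq_norm] at hzd
    calc dist (x a) (x b) ≤ ‖x a - z‖ + ‖x b - z‖ := h3
      _ ≤ ‖x K - z‖ + ‖x K - z‖ := add_le_add h1 h2
      _ < ε := by linarith
  obtain ⟨xinf, hxinf⟩ := cauchySeq_tendsto_of_complete hcauchy
  -- closedness of the fixed point sets
  have hclosed : ∀ i, IsClosed (fixedPoints (U i)) := by
    intro i
    have heq : fixedPoints (U i) = ⋂ w : H, {z : H | ⟪w - U i w, z - U i w⟫ ≤ 0} := by
      ext z
      simp only [Set.mem_iInter, Set.mem_setOf_eq]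
      constructor
      · intro hzf w; exact hcutter i w z hzf
      · intro h
        have h1 := h z
        rw [real_inner_self_eq_norm_sq] at h1
        have h2 : ‖z - U i z‖ = 0 := by nlinarith [norm_nonneg (z - U i z)]
        have h3 : z - U i z = 0 := norm_eq_zero.mp h2
        exact (sub_eq_zero.mp h3).symm
    rw [heq]
    refine isClosed_iInter fun w => ?_
    exact isClosed_le (Continuous.inner continuous_const
      (continuous_id.sub continuous_const)) continuous_const
  have hCclosed : IsClosed (⋂ i, fixedPoints (U i)) := isClosed_iInter hclosed
  have hlim : Tendsto (fun k => infDist (x k) (⋂ i, fixedPoints (U i))) atTop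
      (nhds (infDist xinf (⋂ i, fixedPoints (U i)))) :=
    ((continuous_infDist_pt _).tendsto xinf).comp hxinf
  have hzero : infDist xinf (⋂ i, fixedPoints (U i)) = 0 := tendsto_nhds_unique hlim hinfC
  exact ⟨xinf, (hCclosed.mem_iff_infDist_zero ⟨z0, hz0⟩).mpr hzero, hxinf⟩
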